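/- With notation as in the structure theory of flag-transitive subgroups of a regular incidence complex: for any subset Ω of the base flag Φ, the elementwise stabilizer Λ_Ω equals the subgroup generated by those R_i with F_i ∉ Ω. -/

import Mathlib

universe u

variable {α : Type u}

/-- A ranked partial order `(α, ≤)` with rank function `rk` is an incidence complex of
rank `n`: ranks run from `-1` to `n` and are strictly monotone, there are unique minimal
and maximal faces, every flag (maximal chain) contains a face of each rank `-1,…,n` (hence
has exactly `n+2` faces), the complex is strongly flag-connected, and between any two
incident faces of ranks `j-1` and `j+1` there are at least two faces of rank `j`. -/
structure IsIncidenceComplex (n : ℕ) [PartialOrder α] (rk : α → ℤ) : Prop where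
  rk_strictMono : ∀ {F G : α}, F < G → rk F < rk G
  rk_range : ∀ F : α, -1 ≤ rk F ∧ rk F ≤ n
  exists_bot : ∃ B : α, rk B = -1 ∧ ∀ F : α, B ≤ F
  exists_top : ∃ T : α, rk T = n ∧ ∀ F : α, F ≤ T
  flag_rk : ∀ Φ : Set α, IsMaxChain (· ≤ ·) Φ → ∀ j : ℤ, -1 ≤ j → j ≤ n →
    ∃ F ∈ Φ, rk F = j
  strongly_connected : ∀ Φ Ψ : Set α, IsMaxChain (· ≤ ·) Φ → IsMaxChain (· ≤ ·) Ψ →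
    Relation.ReflTransGen
      (fun A B => IsMaxChain (· ≤ ·) A ∧ IsMaxChain (· ≤ ·) B ∧ Φ ∩ Ψ ⊆ A ∧ Φ ∩ Ψ ⊆ B ∧
        ∃ F G, F ∈ A ∧ G ∈ B ∧ F ≠ G ∧ A \ {F} = B \ {G}) Φ Ψ
  diamond_ge_two : ∀ F G : α, F < G → rk G = rk F + 2 →
    ∃ H₁ H₂ : α, H₁ ≠ H₂ ∧ F < H₁ ∧ H₁ < G ∧ F < H₂ ∧ H₂ < G

/-- Two flags are `i`-adjacent when they differ in exactly one face, of rank `i`. -/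
def IAdjacent [PartialOrder α] (rk : α → ℤ) (i : ℤ) (Φ Ψ : Set α) : Prop :=
  ∃ F G, F ∈ Φ ∧ G ∈ Ψ ∧ F ≠ G ∧ rk F = i ∧ rk G = i ∧ Φ \ {F} = Ψ \ {G}

/-- The group of order automorphisms of `α`, as a subgroup of the permutations of `α`. -/
def orderAutGroup (α : Type u) [PartialOrder α] : Subgroup (Equiv.Perm α) where
  carrier := {φ | ∀ a b : α, φ a ≤ φ b ↔ a ≤ b}
  one_mem' := fun _ _ => Iff.rfl
  mul_mem' := by
    intro f g hf hg a b
    rw [Equiv.Perm.mul_apply, Equiv.Perm.mul_apply]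
    exact (hf (g a) (g b)).trans (hg a b)
  inv_mem' := by
    intro f hf a b
    conv_rhs => rw [← show f (f⁻¹ a) = a from f.apply_symm_apply a, ← show f (f⁻¹ b) = b from f.apply_symm_apply b]
    exact (hf _ _).symm

/-- `Λ` is a flag-transitive group of automorphisms. -/
def FlagTransitive [PartialOrder α] (Λ : Subgroup (Equiv.Perm α)) : Prop :=
  ∀ Φ Ψ : Set α, IsMaxChain (· ≤ ·) Φ → IsMaxChain (· ≤ ·) Ψ → ∃ γ ∈ Λ, γ '' Φ = Ψ

/-- The elementwise stabilizer in `Λ` of a set `Ω` of faces. -/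
def stabOf [PartialOrder α] (Λ : Subgroup (Equiv.Perm α)) (Ω : Set α) :
    Subgroup (Equiv.Perm α) where
  carrier := {γ | γ ∈ Λ ∧ ∀ x ∈ Ω, γ x = x}
  one_mem' := ⟨Λ.one_mem, fun _ _ => rfl⟩
  mul_mem' := by
    intro f g hf hg
    refine ⟨Λ.mul_mem hf.1 hg.1, fun x hx => ?_⟩
    rw [Equiv.Perm.mul_apply, hg.2 x hx, hf.2 x hx]
  inv_mem' := by
    intro f hf
    refine ⟨Λ.inv_mem hf.1, fun x hx => ?_⟩
    simpa using (congrArg (⇑f⁻¹) (hf.2 x hx)).symm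

/-- The distinguished subgroup `R_i` of `Λ` relative to a base flag enumerated by
`F : Fin n → α`: the elements of `Λ` fixing every base face `F j` with `j ≠ i`.  For
`i ∉ {0,…,n-1}` (e.g. `i = -1` or `i = n`) this is the stabilizer of the base flag. -/
def distinguishedSubgroup [PartialOrder α] {n : ℕ} (Λ : Subgroup (Equiv.Perm α))
    (F : Fin n → α) (i : ℤ) : Subgroup (Equiv.Perm α) :=
  stabOf Λ {x | ∃ j : Fin n, (j : ℤ) ≠ i ∧ x = F j}

section Helpers
variable [PartialOrder α] {n : ℕ} {rk : α → ℤ}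

lemma orderAut_lt' {φ : Equiv.Perm α} (hφ : φ ∈ orderAutGroup α) {a b : α} (hab : a < b) :
    φ a < φ b :=
  lt_iff_le_and_ne.mpr ⟨(hφ a b).mpr hab.le, fun e => hab.ne (φ.injective e)⟩

lemma orderAut_image_maxChain' {φ : Equiv.Perm α} (hφ : φ ∈ orderAutGroup α)
    {Φ : Set α} (hΦ : IsMaxChain (· ≤ ·) Φ) : IsMaxChain (· ≤ ·) (⇑φ '' Φ) := by
  have hφ' := (orderAutGroup α).inv_mem hφ
  constructor
  · rintro _ ⟨a, ha, rfl⟩ _ ⟨b, hb, rfl⟩ hne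
    have hne' : a ≠ b := fun e => hne (by rw [e])
    rcases hΦ.1 ha hb hne' with hle | hle
    · exact Or.inl ((hφ a b).mpr hle)
    · exact Or.inr ((hφ b a).mpr hle)
  · intro t ht hsub
    have hpre : IsChain (· ≤ ·) (⇑φ⁻¹ '' t) := by
      rintro _ ⟨a, ha, rfl⟩ _ ⟨b, hb, rfl⟩ hne
      have hne' : a ≠ b := fun e => hne (by rw [e])
      rcases ht ha hb hne' with hle | hle
      · exact Or.inl ((hφ' a b).mpr hle)
      · exact Or.inr ((hφ' b a).mpr hle)
    have hsub' : Φ ⊆ ⇑φ⁻¹ '' t := fun x hx =>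
      ⟨φ x, hsub ⟨x, hx, rfl⟩, φ.symm_apply_apply x⟩
    rw [hΦ.2 hpre hsub', Set.image_image]
    simp

lemma chain_rank_inj (h : IsIncidenceComplex n rk) {Φ : Set α} (hΦ : IsChain (· ≤ ·) Φ)
    {x y : α} (hx : x ∈ Φ) (hy : y ∈ Φ) (hr : rk x = rk y) : x = y := by
  by_contra hne
  rcases hΦ hx hy hne with hle | hle
  · exact absurd hr (ne_of_lt (h.rk_strictMono (lt_of_le_of_ne hle hne)))
  · exact absurd hr.symm (ne_of_lt (h.rk_strictMono (lt_of_le_of_ne hle (Ne.symm hne))))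

lemma rank_le_aut (h : IsIncidenceComplex n rk) {φ : Equiv.Perm α}
    (hφ : φ ∈ orderAutGroup α) : ∀ x : α, rk x ≤ rk (φ x) := by
  suffices H : ∀ m : ℕ, ∀ x : α, rk x ≤ -1 + m → rk x ≤ rk (φ x) by
    intro x
    exact H (n + 1) x (by have := (h.rk_range x).2; push_cast; omega)
  intro m
  induction m with
  | zero =>
    intro x hx
    have h1 := (h.rk_range (φ x)).1
    have h2 := (h.rk_range x).1
    omega
  | succ m ih =>
    intro x hx
    by_cases h0 : rk x ≤ -1 + m
    · exact ih x h0
    obtain ⟨Φ, hΦ, hxΦ⟩ := (IsChain.singleton (r := (· ≤ ·)) (a := x)).exists_maxChain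
    have hxΦ : x ∈ Φ := hxΦ rfl
    obtain ⟨y, hyΦ, hy⟩ := h.flag_rk Φ hΦ (rk x - 1)
      (by have := (h.rk_range x).1; push_cast at hx ⊢; omega)
      (by have := (h.rk_range x).2; omega)
    have hyx : y < x := by
      have hne : y ≠ x := fun e => by rw [e] at hy; omega
      rcases hΦ.1 hyΦ hxΦ hne with hle | hle
      · exact lt_of_le_of_ne hle hne
      · exact absurd (h.rk_strictMono (lt_of_le_of_ne hle hne.symm)) (by omega)
    have h1 := ih y (by push_cast at hx ⊢; omega)
    have h2 := h.rk_strictMono (orderAut_lt' hφ hyx)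
    omega

lemma rank_aut (h : IsIncidenceComplex n rk) {φ : Equiv.Perm α}
    (hφ : φ ∈ orderAutGroup α) (x : α) : rk (φ x) = rk x := by
  have h1 := rank_le_aut h hφ x
  have h2 := rank_le_aut h ((orderAutGroup α).inv_mem hφ) (φ x)
  rw [show φ⁻¹ (φ x) = x from φ.symm_apply_apply x] at h2
  omega

lemma eq_of_rk_bot (h : IsIncidenceComplex n rk) {B x : α} (hB : rk B = -1 ∧ ∀ F : α, B ≤ F)
    (hx : rk x = -1) : x = B := by
  by_contra hne
  have := h.rk_strictMono (lt_of_le_of_ne (hB.2 x) (Ne.symm hne))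
  omega

lemma eq_of_rk_top (h : IsIncidenceComplex n rk) {T x : α} (hT : rk T = n ∧ ∀ F : α, F ≤ T)
    (hx : rk x = n) : x = T := by
  by_contra hne
  have := h.rk_strictMono (lt_of_le_of_ne (hT.2 x) hne)
  omega

end Helpers


/-- For any subset `Ω` of the base flag `Φ`, the elementwise stabilizer
`Λ_Ω` equals the subgroup generated by those `R i` with `F i ∉ Ω` (together with the flag
stabilizer `R (-1) = Λ_Φ`, which is contained in every `R i`, so that the convention
`Λ_∅ = Λ_Φ` is respected when `Ω = Φ`). -/
theorem stabilizer_eq_generated_by_complement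
    {α : Type u} [PartialOrder α] {n : ℕ} (rk : α → ℤ)
    (h : IsIncidenceComplex n rk)
    (Λ : Subgroup (Equiv.Perm α)) (hΛ : Λ ≤ orderAutGroup α)
    (htrans : FlagTransitive Λ)
    (Φ : Set α) (hΦ : IsMaxChain (· ≤ ·) Φ)
    (F : Fin n → α) (hF : ∀ i : Fin n, F i ∈ Φ ∧ rk (F i) = (i : ℤ))
    (Ω : Set α) (hΩ : Ω ⊆ Φ) :
    stabOf Λ Ω
      = distinguishedSubgroup Λ F (-1)
          ⊔ ⨆ i : Fin n, ⨆ _ : F i ∉ Ω, distinguishedSubgroup Λ F (i : ℤ) := by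
  obtain ⟨B, hBrk, hBle⟩ := h.exists_bot
  obtain ⟨T, hTrk, hTle⟩ := h.exists_top
  set N := distinguishedSubgroup Λ F (-1)
      ⊔ ⨆ i : Fin n, ⨆ _ : F i ∉ Ω, distinguishedSubgroup Λ F (i : ℤ) with hNdef
  -- membership in the base flag
  have memΦ : ∀ x ∈ Φ, x = B ∨ x = T ∨ ∃ i : Fin n, x = F i := by
    intro x hx
    have hr := h.rk_range x
    by_cases hb : rk x = -1
    · exact Or.inl (eq_of_rk_bot h ⟨hBrk, hBle⟩ hb)
    by_cases ht : rk x = n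
    · exact Or.inr (Or.inl (eq_of_rk_top h ⟨hTrk, hTle⟩ ht))
    have h0 : 0 ≤ rk x := by omega
    have h1 : (rk x).toNat < n := by omega
    refine Or.inr (Or.inr ⟨⟨(rk x).toNat, h1⟩, ?_⟩)
    refine chain_rank_inj h hΦ.isChain hx (hF _).1 ?_
    rw [(hF _).2]
    simp [Int.toNat_of_nonneg h0]
  -- automorphisms in Λ fix B and T
  have fixBT : ∀ γ ∈ Λ, γ B = B ∧ γ T = T := by
    intro γ hγ
    have hγa := hΛ hγ
    constructor
    · exact eq_of_rk_bot h ⟨hBrk, hBle⟩ (by rw [rank_aut h hγa, hBrk])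
    · exact eq_of_rk_top h ⟨hTrk, hTle⟩ (by rw [rank_aut h hγa, hTrk])
  -- ⊇ direction
  have hNle : N ≤ stabOf Λ Ω := by
    rw [hNdef]
    refine sup_le ?_ (iSup_le fun i => iSup_le fun hFi => ?_)
    · rintro γ ⟨hγΛ, hγfix⟩
      refine ⟨hγΛ, fun x hx => ?_⟩
      rcases memΦ x (hΩ hx) with rfl | rfl | ⟨j, rfl⟩
      · exact (fixBT γ hγΛ).1
      · exact (fixBT γ hγΛ).2
      · exact hγfix (F j) ⟨j, by omega, rfl⟩
    · rintro γ ⟨hγΛ, hγfix⟩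
      refine ⟨hγΛ, fun x hx => ?_⟩
      rcases memΦ x (hΩ hx) with rfl | rfl | ⟨j, rfl⟩
      · exact (fixBT γ hγΛ).1
      · exact (fixBT γ hγΛ).2
      · refine hγfix (F j) ⟨j, fun e => ?_, rfl⟩
        have : j = i := Fin.ext (by exact_mod_cast e)
        exact hFi (this ▸ hx)
  refine le_antisymm ?_ hNle
  -- ⊆ direction
  rintro γ ⟨hγΛ, hγfix⟩
  have hγAut := hΛ hγΛ
  have hΨmax : IsMaxChain (· ≤ ·) (⇑γ '' Φ) := orderAut_image_maxChain' hγAut hΦ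
  have hΩsub : Ω ⊆ Φ ∩ (⇑γ '' Φ) := fun x hx => ⟨hΩ hx, ⟨x, hΩ hx, hγfix x hx⟩⟩
  have hconn := h.strongly_connected Φ (⇑γ '' Φ) hΦ hΨmax
  have hgen : ∀ Ψ : Set α, Relation.ReflTransGen
      (fun A B => IsMaxChain (· ≤ ·) A ∧ IsMaxChain (· ≤ ·) B ∧
        Φ ∩ (⇑γ '' Φ) ⊆ A ∧ Φ ∩ (⇑γ '' Φ) ⊆ B ∧
        ∃ F G, F ∈ A ∧ G ∈ B ∧ F ≠ G ∧ A \ {F} = B \ {G}) Φ Ψ →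
      ∃ δ : Equiv.Perm α, δ ∈ N ∧ ⇑δ '' Φ = Ψ := by
    intro Ψ hconn
    induction hconn with
    | refl => exact ⟨1, one_mem N, by simp⟩
    | @tail b c hab hbc ih =>
      obtain ⟨δ, hδN, hδb⟩ := ih
      obtain ⟨hbmax, hcmax, hsubb, hsubc, Fa, Ga, hFa, hGa, hne, hdiff⟩ := hbc
      have hδstab := hNle hδN
      have hδΛ : δ ∈ Λ := hδstab.1
      have hδAut := hΛ hδΛ
      have hδinvAut := (orderAutGroup α).inv_mem hδAut
      -- Fa ∉ c
      have hFanotc : Fa ∉ c := by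
        intro hc
        have : Fa ∈ c \ {Ga} := ⟨hc, hne⟩
        rw [← hdiff] at this
        exact this.2 rfl
      -- rk Ga = rk Fa
      have hGark : rk Ga = rk Fa := by
        obtain ⟨x, hxc, hxrk⟩ := h.flag_rk c hcmax (rk Fa) (h.rk_range Fa).1 (h.rk_range Fa).2
        have hxGa : x = Ga := by
          by_contra hxne
          have hx' : x ∈ c \ {Ga} := ⟨hxc, hxne⟩
          rw [← hdiff] at hx'
          exact hx'.2 (chain_rank_inj h hbmax.isChain hx'.1 hFa hxrk)
        rw [← hxGa, hxrk]
      -- rank of Fa is strictly between -1 and n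
      have hFane1 : rk Fa ≠ -1 := by
        intro e
        exact hne ((eq_of_rk_bot h ⟨hBrk, hBle⟩ e).trans
          (eq_of_rk_bot h ⟨hBrk, hBle⟩ (hGark.trans e)).symm)
      have hFanen : rk Fa ≠ n := by
        intro e
        exact hne ((eq_of_rk_top h ⟨hTrk, hTle⟩ e).trans
          (eq_of_rk_top h ⟨hTrk, hTle⟩ (hGark.trans e)).symm)
      have hFarange := h.rk_range Fa
      have h0 : 0 ≤ rk Fa := by omega
      set i : Fin n := ⟨(rk Fa).toNat, by omega⟩ with hidef
      have hirk : (i : ℤ) = rk Fa := by simp [hidef, Int.toNat_of_nonneg h0]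
      -- F i ∉ Ω
      have hFiΩ : F i ∉ Ω := by
        intro hmem
        have h1 : F i ∈ c := hsubc (hΩsub hmem)
        have h3 : F i ∈ b := by
          rw [← hδb]
          exact ⟨F i, (hF i).1, hδstab.2 (F i) hmem⟩
        have h4 : F i = Fa :=
          chain_rank_inj h hbmax.isChain h3 hFa (by rw [(hF i).2, hirk])
        exact hFanotc (h4 ▸ h1)
      -- flag transitivity to δ⁻¹ '' c
      have hDmax : IsMaxChain (· ≤ ·) (⇑δ⁻¹ '' c) := orderAut_image_maxChain' hδinvAut hcmax
      obtain ⟨γ', hγ'Λ, hγ'Φ⟩ := htrans Φ (⇑δ⁻¹ '' c) hΦ hDmax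
      have hγ'Aut := hΛ hγ'Λ
      -- γ' ∈ R i
      have hγ'R : γ' ∈ distinguishedSubgroup Λ F (i : ℤ) := by
        refine ⟨hγ'Λ, ?_⟩
        rintro x ⟨j, hji, rfl⟩
        have h1 : γ' (F j) ∈ ⇑δ⁻¹ '' c := by
          rw [← hγ'Φ]; exact ⟨F j, (hF j).1, rfl⟩
        have h2 : F j ∈ ⇑δ⁻¹ '' c := by
          have hb1 : δ (F j) ∈ b := by rw [← hδb]; exact ⟨F j, (hF j).1, rfl⟩
          have hrkδ : rk (δ (F j)) = (j : ℤ) := by rw [rank_aut h hδAut, (hF j).2]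
          have hne2 : δ (F j) ≠ Fa := by
            intro e
            apply hji
            rw [hirk, ← e, hrkδ]
          have hmc : δ (F j) ∈ c := by
            have : δ (F j) ∈ b \ {Fa} := ⟨hb1, hne2⟩
            rw [hdiff] at this
            exact this.1
          exact ⟨δ (F j), hmc, Equiv.symm_apply_apply δ (F j)⟩
        exact chain_rank_inj h hDmax.isChain h1 h2
          (by rw [rank_aut h hγ'Aut])
      have hRiN : distinguishedSubgroup Λ F (i : ℤ) ≤ N := by
        rw [hNdef]
        exact le_trans (le_iSup_of_le i (le_iSup_of_le (f := fun _ : F i ∉ Ω => distinguishedSubgroup Λ F (i : ℤ)) hFiΩ le_rfl)) le_sup_right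
      refine ⟨δ * γ', mul_mem hδN (hRiN hγ'R), ?_⟩
      have : ⇑(δ * γ') '' Φ = ⇑δ '' (⇑γ' '' Φ) := by
        rw [← Set.image_comp]; rfl
      rw [this, hγ'Φ, Set.image_image]
      simp
  obtain ⟨δ, hδN, hδΦ⟩ := hgen (⇑γ '' Φ) hconn
  -- finish: δ⁻¹ * γ fixes the base flag
  set ε := δ⁻¹ * γ with hεdef
  have hεΛ : ε ∈ Λ := mul_mem (inv_mem (hNle hδN).1) hγΛ
  have hεAut := hΛ hεΛ
  have hεΦ : ⇑ε '' Φ = Φ := by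
    have : ⇑ε '' Φ = ⇑δ⁻¹ '' (⇑γ '' Φ) := by rw [← Set.image_comp]; rfl
    rw [this, ← hδΦ, Set.image_image]
    simp
  have hεR : ε ∈ distinguishedSubgroup Λ F (-1) := by
    refine ⟨hεΛ, ?_⟩
    rintro x ⟨j, _, rfl⟩
    have h1 : ε (F j) ∈ Φ := by rw [← hεΦ]; exact ⟨F j, (hF j).1, rfl⟩
    exact chain_rank_inj h hΦ.isChain h1 (hF j).1 (by rw [rank_aut h hεAut])
  have hR1N : distinguishedSubgroup Λ F (-1) ≤ N := by rw [hNdef]; exact le_sup_left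
  have : δ * ε = γ := by rw [hεdef, mul_inv_cancel_left]
  rw [← this]
  exact mul_mem hδN (hR1N hεR)
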